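/- arXiv:2203.11703 — 4 statements merged into one kernel-verified Lean document; each statement's English description precedes it below -/
import Mathlib

section
/- (Diffeomorphism between trajectories of switching equivalent systems.) Let Θ be a signature matrix and let x : ℝ → ℝ^N be differentiable. Then x(t) satisfies x'(t) = −d x(t) + U S(α x(t) + γ A x(t)) for all t if and only if the curve y(t) := Θ x(t) satisfies y'(t) = −d y(t) + U S(α y(t) + γ (ΘAΘ) y(t)) for all t. -/
private lemma switching_aux {N : ℕ} (A : Matrix (Fin N) (Fin N) ℝ)
    (d α γ : ℝ) (u : Fin N → ℝ)
    (S : ℝ → ℝ) (hSodd : ∀ y, S (-y) = -S y)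
    (θ : Fin N → ℝ) (hθ : ∀ i, θ i = 1 ∨ θ i = -1)
    (x : ℝ → Fin N → ℝ)
    (h : ∀ t : ℝ, HasDerivAt x
        (-d • x t + (Matrix.diagonal u).mulVec
          (fun i => S ((α • x t + γ • A.mulVec (x t)) i))) t) :
    ∀ t : ℝ, HasDerivAt (fun s => (Matrix.diagonal θ).mulVec (x s))
        (-d • (Matrix.diagonal θ).mulVec (x t)
          + (Matrix.diagonal u).mulVec (fun i =>
              S ((α • (Matrix.diagonal θ).mulVec (x t)
                  + γ • (Matrix.diagonal θ * A * Matrix.diagonal θ).mulVec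
                      ((Matrix.diagonal θ).mulVec (x t))) i))) t := by
  have hθθ : ∀ i, θ i * θ i = 1 := fun i => by rcases hθ i with h1 | h1 <;> simp [h1]
  have hSθ : ∀ i y, S (θ i * y) = θ i * S y := fun i y => by
    rcases hθ i with h1 | h1 <;> simp [h1, hSodd]
  intro t
  -- derivative of componentwise θ i * x s i
  have hder : HasDerivAt (fun s => (Matrix.diagonal θ).mulVec (x s))
      ((Matrix.diagonal θ).mulVec (-d • x t + (Matrix.diagonal u).mulVec
          (fun i => S ((α • x t + γ • A.mulVec (x t)) i)))) t := by
    rw [hasDerivAt_pi]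
    intro i
    have := (hasDerivAt_pi.1 (h t)) i
    have h2 := this.const_mul (θ i)
    simpa [Matrix.mulVec_diagonal] using h2
  convert hder using 1
  funext i
  have hΘΘ : (Matrix.diagonal θ * A * Matrix.diagonal θ).mulVec
      ((Matrix.diagonal θ).mulVec (x t)) = (Matrix.diagonal θ).mulVec (A.mulVec (x t)) := by
    have h1 : Matrix.diagonal θ * Matrix.diagonal θ = (1 : Matrix (Fin N) (Fin N) ℝ) := by
      rw [Matrix.diagonal_mul_diagonal]; simp [hθθ, Matrix.diagonal_one]
    rw [Matrix.mulVec_mulVec, show Matrix.diagonal θ * A * Matrix.diagonal θ * Matrix.diagonal θ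
      = Matrix.diagonal θ * A * (Matrix.diagonal θ * Matrix.diagonal θ) by simp [mul_assoc],
      h1, mul_one, ← Matrix.mulVec_mulVec]
  rw [hΘΘ]
  simp only [Pi.add_apply, Pi.smul_apply, Matrix.mulVec_diagonal, smul_eq_mul]
  rw [show α * (θ i * x t i) + γ * (θ i * A.mulVec (x t) i)
      = θ i * (α * x t i + γ * A.mulVec (x t) i) by ring, hSθ]
  ring

/-- Diffeomorphism between trajectories of switching equivalent systems: `x(t)` solves
the opinion dynamics on `A` iff `Θ x(t)` solves the opinion dynamics on `ΘAΘ`. -/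
theorem switching_trajectories {N : ℕ} (A : Matrix (Fin N) (Fin N) ℝ)
    (d α γ : ℝ) (hd : 0 < d) (hα : 0 ≤ α) (hγ : 0 < γ)
    (u : Fin N → ℝ) (hu : ∀ i, 0 < u i)
    (S : ℝ → ℝ) (hSodd : ∀ y, S (-y) = -S y) (hS0 : S 0 = 0)
    (θ : Fin N → ℝ) (hθ : ∀ i, θ i = 1 ∨ θ i = -1)
    (x : ℝ → Fin N → ℝ) (hx : Differentiable ℝ x) :
    (∀ t : ℝ, HasDerivAt x
        (-d • x t + (Matrix.diagonal u).mulVec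
          (fun i => S ((α • x t + γ • A.mulVec (x t)) i))) t) ↔
    (∀ t : ℝ, HasDerivAt (fun s => (Matrix.diagonal θ).mulVec (x s))
        (-d • (Matrix.diagonal θ).mulVec (x t)
          + (Matrix.diagonal u).mulVec (fun i =>
              S ((α • (Matrix.diagonal θ).mulVec (x t)
                  + γ • (Matrix.diagonal θ * A * Matrix.diagonal θ).mulVec
                      ((Matrix.diagonal θ).mulVec (x t))) i))) t) := by
  have hθθ : ∀ i, θ i * θ i = 1 := fun i => by rcases hθ i with h1 | h1 <;> simp [h1]
  have hΘΘ1 : Matrix.diagonal θ * Matrix.diagonal θ = (1 : Matrix (Fin N) (Fin N) ℝ) := by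
    rw [Matrix.diagonal_mul_diagonal]
    simp [hθθ, Matrix.diagonal_one]
  have hinv : ∀ v : Fin N → ℝ, (Matrix.diagonal θ).mulVec ((Matrix.diagonal θ).mulVec v) = v := by
    intro v
    rw [Matrix.mulVec_mulVec, hΘΘ1, Matrix.one_mulVec]
  constructor
  · exact switching_aux A d α γ u S hSodd θ hθ x
  · intro h
    have h2 := switching_aux (Matrix.diagonal θ * A * Matrix.diagonal θ) d α γ u S hSodd θ hθ
      (fun s => (Matrix.diagonal θ).mulVec (x s)) h
    intro t
    have hA : Matrix.diagonal θ * (Matrix.diagonal θ * A * Matrix.diagonal θ) * Matrix.diagonal θ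
        = A := by
      rw [show Matrix.diagonal θ * (Matrix.diagonal θ * A * Matrix.diagonal θ) * Matrix.diagonal θ
        = (Matrix.diagonal θ * Matrix.diagonal θ) * A * (Matrix.diagonal θ * Matrix.diagonal θ)
        by simp only [mul_assoc], hΘΘ1]
      simp
    have := h2 t
    simp only [hinv, hA] at this
    exact this
end

section
/- (Boundedness / forward invariance.) Assume in addition that |S(y)| ≤ 1 for all y ∈ ℝ. Fix r ≥ 1 and let Ω_r = { x ∈ ℝ^N : |x_i| ≤ r · (max_j u_j)/d for all i }. Then Ω_r is forward invariant for the opinion dynamics: if x : [0,∞) → ℝ^N is a solution with x(0) ∈ Ω_r, then x(t) ∈ Ω_r for all t ≥ 0. -/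
private lemma ode_one_sided {d C K : ℝ} (hd : 0 < d) (f b : ℝ → ℝ)
    (hf : ∀ t, 0 ≤ t → HasDerivAt f (-d * f t + b t) t)
    (hb : ∀ t, 0 ≤ t → b t ≤ C)
    (hK : f 0 ≤ K) (hCK : C ≤ d * K) :
    ∀ t, 0 ≤ t → f t ≤ K := by
  set g : ℝ → ℝ := fun t => Real.exp (d * t) * (f t - K) with hg
  have hg' : ∀ t, 0 ≤ t → HasDerivAt g (Real.exp (d * t) * (b t - d * K)) t := by
    intro t ht
    have h1 : HasDerivAt (fun s : ℝ => Real.exp (d * s)) (Real.exp (d * t) * (d * 1)) t :=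
      ((hasDerivAt_id t).const_mul d).exp
    have h2 := (hf t ht).sub_const K
    have := h1.mul h2
    refine this.congr_deriv ?_
    ring
  have hanti : AntitoneOn g (Set.Ici (0 : ℝ)) := by
    apply antitoneOn_of_deriv_nonpos (convex_Ici 0)
    · intro t ht
      exact (hg' t ht).continuousAt.continuousWithinAt
    · intro t ht
      rw [interior_Ici] at ht
      exact (hg' t (le_of_lt ht)).differentiableAt.differentiableWithinAt
    · intro t ht
      rw [interior_Ici] at ht
      rw [(hg' t (le_of_lt ht)).deriv]
      have : b t - d * K ≤ 0 := by linarith [hb t (le_of_lt ht)]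
      exact mul_nonpos_of_nonneg_of_nonpos (Real.exp_pos _).le this
  intro t ht
  have hle : Real.exp (d * t) * (f t - K) ≤ f 0 - K := by
    simpa [hg] using hanti (Set.self_mem_Ici) ht ht
  have hexp : 0 < Real.exp (d * t) := Real.exp_pos _
  nlinarith [hexp, hle]

/-- Boundedness / forward invariance: with `|S| ≤ 1`, the box
`Ω_r = {x : |x_i| ≤ r·(max_j u_j)/d}` (with `r ≥ 1`) is forward invariant for the
opinion dynamics. -/
theorem box_forward_invariant {N : ℕ} (hN : 0 < N) (A : Matrix (Fin N) (Fin N) ℝ)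
    (d α γ : ℝ) (hd : 0 < d) (hα : 0 ≤ α) (hγ : 0 < γ)
    (u : Fin N → ℝ) (hu : ∀ i, 0 < u i)
    (S : ℝ → ℝ) (hSodd : ∀ y, S (-y) = -S y) (hS0 : S 0 = 0)
    (hSbd : ∀ y, |S y| ≤ 1)
    (r : ℝ) (hr : 1 ≤ r)
    (x : ℝ → Fin N → ℝ)
    (hx : ∀ t : ℝ, 0 ≤ t → HasDerivAt x
        (-d • x t + (Matrix.diagonal u).mulVec
          (fun i => S ((α • x t + γ • A.mulVec (x t)) i))) t)
    (hx0 : ∀ i, |x 0 i| ≤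
      r * (Finset.univ.sup' (Finset.univ_nonempty_iff.mpr ⟨⟨0, hN⟩⟩) u) / d) :
    ∀ t : ℝ, 0 ≤ t → ∀ i, |x t i| ≤
      r * (Finset.univ.sup' (Finset.univ_nonempty_iff.mpr ⟨⟨0, hN⟩⟩) u) / d := by
  set M : ℝ := Finset.univ.sup' (Finset.univ_nonempty_iff.mpr ⟨⟨0, hN⟩⟩) u with hM
  have hMpos : 0 < M := lt_of_lt_of_le (hu ⟨0, hN⟩) (Finset.le_sup' u (Finset.mem_univ _))
  set K : ℝ := r * M / d with hKdef
  have hdK : d * K = r * M := by rw [hKdef]; field_simp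
  intro t ht i
  -- componentwise derivative
  set b : ℝ → ℝ := fun s => u i * S ((α • x s + γ • A.mulVec (x s)) i) with hb
  have hfi : ∀ s, 0 ≤ s → HasDerivAt (fun s => x s i) (-d * x s i + b s) s := by
    intro s hs
    have := (hasDerivAt_pi.1 (hx s hs)) i
    refine this.congr_deriv ?_
    simp [hb, Matrix.mulVec_diagonal, neg_mul]
  have hbbd : ∀ s, 0 ≤ s → |b s| ≤ M := by
    intro s hs
    have hui : u i ≤ M := Finset.le_sup' u (Finset.mem_univ i)
    calc |b s| = u i * |S _| := by rw [hb, abs_mul, abs_of_pos (hu i)]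
      _ ≤ u i * 1 := by exact mul_le_mul_of_nonneg_left (hSbd _) (hu i).le
      _ ≤ M := by linarith
  have hCK : M ≤ d * K := by rw [hdK]; nlinarith
  have hx0i := hx0 i
  have habs0 : |x 0 i| ≤ K := hx0i
  rw [abs_le] at habs0
  rw [abs_le]
  constructor
  · -- lower bound: apply to -f
    have hneg : ∀ s, 0 ≤ s → HasDerivAt (fun s => -(x s i)) (-d * (-(x s i)) + (-(b s))) s := by
      intro s hs
      have h := (hfi s hs).neg
      refine h.congr_deriv ?_
      ring
    have hres := ode_one_sided hd (fun s => -(x s i)) (fun s => -(b s)) hneg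
      (fun s hs => by
        show -(b s) ≤ M
        linarith [(abs_le.1 (hbbd s hs)).1])
      (by show -(x 0 i) ≤ K; linarith [habs0.1]) hCK t ht
    have : -(x t i) ≤ K := hres
    linarith
  · exact ode_one_sided hd (fun s => x s i) b hfi
      (fun s hs => (abs_le.1 (hbbd s hs)).2) habs0.2 hCK t ht
end

section
/- (Lyapunov decrease inequality.) Let A ∈ ℝ^{N×N} be symmetric with largest eigenvalue λ*, let d > 0, α ≥ 0, γ > 0 with α + γλ* > 0, let u satisfy 0 ≤ u < d/(α + γλ*), and set à = α I_N + γ A. Let S : ℝ → ℝ be odd, nondecreasing, concave on [0,∞), and differentiable at 0 with S′(0) = 1. Then for every x ∈ ℝ^N, ⟨S(Ãx), Ã(−d x + u S(Ãx))⟩ ≤ −(d − u(α + γλ*)) ‖S(Ãx)‖² ≤ 0, where S is applied componentwise and ‖·‖ is the Euclidean norm. (This quantity is the time derivative of the Lyapunov function V(x) = Σ_i ∫₀^{(Ãx)_i} S(η) dη along solutions with homogeneous attention u_i = u.) -/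
open Finset Matrix

lemma rayleigh_aux {N : ℕ} (A : Matrix (Fin N) (Fin N) ℝ) (hA : A.IsSymm) (lamStar : ℝ)
    (hmax : ∀ μ : ℝ, (∃ v : Fin N → ℝ, v ≠ 0 ∧ A.mulVec v = μ • v) → μ ≤ lamStar)
    (v : Fin N → ℝ) : ∑ i, v i * (A.mulVec v) i ≤ lamStar * ∑ i, v i ^ 2 := by
  have hH : A.IsHermitian := by
    rwa [Matrix.IsHermitian, Matrix.conjTranspose_eq_transpose_of_trivial]
  set b := hH.eigenvectorBasis with hb
  set μ := hH.eigenvalues with hμ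
  have hle : ∀ i, μ i ≤ lamStar := fun i =>
    hmax _ ⟨b i, by simpa using b.orthonormal.ne_zero i, hH.mulVec_eigenvectorBasis i⟩
  set w := (WithLp.equiv 2 (Fin N → ℝ)).symm v with hw
  set Aw := (WithLp.equiv 2 (Fin N → ℝ)).symm (A.mulVec v) with hAw
  have key : ∀ i, (inner ℝ (b i) Aw : ℝ) = μ i * inner ℝ (b i) w := by
    intro i
    have h1 : (inner ℝ (b i) Aw : ℝ) = (A.mulVec (⇑(b i))) ⬝ᵥ v := by
      rw [← Matrix.vecMul_transpose, hA.eq, ← Matrix.dotProduct_mulVec]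
      simp [PiLp.inner_apply, RCLike.inner_apply, dotProduct, hAw,
        PiLp.toLp_apply, mul_comm]
    rw [h1, hH.mulVec_eigenvectorBasis i]
    simp [PiLp.inner_apply, RCLike.inner_apply, dotProduct, hw,
      PiLp.toLp_apply, Finset.mul_sum, mul_comm, mul_left_comm, hb, hμ]
  have e1 : ∑ i, v i * (A.mulVec v) i = (inner ℝ w Aw : ℝ) := by
    simp [PiLp.inner_apply, RCLike.inner_apply, hw, hAw, PiLp.toLp_apply, mul_comm]
  have e2 : ∑ i, v i ^ 2 = (inner ℝ w w : ℝ) := by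
    rw [hw, PiLp.inner_apply]; simp [RCLike.inner_apply, PiLp.toLp_apply, sq]
  rw [e1, e2, ← b.sum_inner_mul_inner w Aw, ← b.sum_inner_mul_inner w w, Finset.mul_sum]
  apply Finset.sum_le_sum
  intro i _
  rw [key i, real_inner_comm w (b i)]
  nlinarith [sq_nonneg (inner ℝ (b i) w : ℝ), hle i]

lemma S_sq_le (S : ℝ → ℝ) (hSodd : ∀ y, S (-y) = -S y) (hSmono : Monotone S)
    (hSconc : ConcaveOn ℝ (Set.Ici 0) S) (hS'0 : HasDerivAt S 1 0) :
    ∀ y : ℝ, S y ^ 2 ≤ y * S y := by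
  have hS0 : S 0 = 0 := by have := hSodd 0; simp at this; linarith
  have hpos : ∀ y : ℝ, 0 < y → S y ≤ y := by
    intro y hy
    have hslope : Filter.Tendsto (slope S 0) (nhdsWithin 0 {(0:ℝ)}ᶜ) (nhds 1) :=
      hasDerivAt_iff_tendsto_slope.mp hS'0
    have hslope' : Filter.Tendsto (slope S 0) (nhdsWithin 0 (Set.Ioi 0)) (nhds 1) :=
      hslope.mono_left (nhdsWithin_mono 0 (fun t ht => ne_of_gt ht))
    have hev : ∀ᶠ t in nhdsWithin 0 (Set.Ioi 0), S y / y ≤ slope S 0 t := by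
      filter_upwards [Ioo_mem_nhdsGT_of_mem (Set.mem_Ico.mpr ⟨le_refl 0, hy⟩)] with t ht
      obtain ⟨ht0, hty⟩ := ht
      have hw1 : (0:ℝ) ≤ 1 - t / y := sub_nonneg.mpr ((div_le_one hy).mpr hty.le)
      have hw2 : (0:ℝ) ≤ t / y := by positivity
      have hconc := hSconc.2 Set.self_mem_Ici (Set.mem_Ici.mpr hy.le)
        hw1 hw2 (by ring)
      have hty' : (1 - t / y) • (0:ℝ) + (t / y) • y = t := by rw [smul_zero, zero_add, smul_eq_mul, div_mul_cancel₀ t hy.ne']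
      rw [hty', hS0] at hconc
      simp only [smul_eq_mul, mul_zero, zero_add] at hconc
      have h2 : t / y * S y * y ≤ S t * y := mul_le_mul_of_nonneg_right hconc hy.le
      have h3 : t / y * S y * y = t * S y := by field_simp
      rw [slope_def_field]
      rw [div_le_div_iff₀ hy (by linarith : (0:ℝ) < t - 0)]
      simp only [hS0, sub_zero]
      nlinarith [h2, h3]
    have hle : S y / y ≤ 1 := ge_of_tendsto hslope' hev
    exact (div_le_one hy).mp hle
  intro y
  rcases lt_trichotomy y 0 with hy | hy | hy
  · have hz : 0 < -y := by linarith
    have h1 : S (-y) ≤ -y := hpos _ hz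
    have h2 : 0 ≤ S (-y) := by rw [← hS0]; exact hSmono hz.le
    have h3 : S y = -S (-y) := by rw [← hSodd]; ring_nf
    nlinarith
  · subst hy; simp [hS0]
  · have h1 : S y ≤ y := hpos _ hy
    have h2 : 0 ≤ S y := by rw [← hS0]; exact hSmono hy.le
    nlinarith

/-- Lyapunov decrease inequality: below threshold, along the opinion dynamics with
homogeneous attention `u`, `⟨S(Ãx), Ã(−dx + uS(Ãx))⟩ ≤ −(d − u(α+γλ*))‖S(Ãx)‖² ≤ 0`. -/
theorem lyapunov_decrease {N : ℕ} (A : Matrix (Fin N) (Fin N) ℝ)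
    (hA : A.IsSymm) (lamStar : ℝ)
    (heig : ∃ v : Fin N → ℝ, v ≠ 0 ∧ A.mulVec v = lamStar • v)
    (hmax : ∀ μ : ℝ, (∃ v : Fin N → ℝ, v ≠ 0 ∧ A.mulVec v = μ • v) → μ ≤ lamStar)
    (d α γ u : ℝ) (hd : 0 < d) (hα : 0 ≤ α) (hγ : 0 < γ)
    (hsum : 0 < α + γ * lamStar) (hu0 : 0 ≤ u) (hu : u < d / (α + γ * lamStar))
    (S : ℝ → ℝ) (hSodd : ∀ y, S (-y) = -S y) (hSmono : Monotone S)
    (hSconc : ConcaveOn ℝ (Set.Ici 0) S) (hS'0 : HasDerivAt S 1 0)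
    (x : Fin N → ℝ) :
    (∑ i, S (((α • (1 : Matrix (Fin N) (Fin N) ℝ) + γ • A).mulVec x) i)
        * (((α • (1 : Matrix (Fin N) (Fin N) ℝ) + γ • A).mulVec
            (-d • x + u • fun j =>
              S (((α • (1 : Matrix (Fin N) (Fin N) ℝ) + γ • A).mulVec x) j))) i)
      ≤ -(d - u * (α + γ * lamStar))
          * ∑ i, S (((α • (1 : Matrix (Fin N) (Fin N) ℝ) + γ • A).mulVec x) i) ^ 2) ∧
    (-(d - u * (α + γ * lamStar))
        * ∑ i, S (((α • (1 : Matrix (Fin N) (Fin N) ℝ) + γ • A).mulVec x) i) ^ 2 ≤ 0) := by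
  set M : Matrix (Fin N) (Fin N) ℝ := α • (1 : Matrix (Fin N) (Fin N) ℝ) + γ • A with hM
  set y : Fin N → ℝ := M.mulVec x with hy
  set s : Fin N → ℝ := fun j => S (y j) with hs
  set Q : ℝ := ∑ i, s i ^ 2 with hQ
  have hQ0 : 0 ≤ Q := Finset.sum_nonneg fun i _ => sq_nonneg _
  have hcoef : u * (α + γ * lamStar) < d := by
    rw [← lt_div_iff₀ hsum] at *; exact hu
  -- second part
  have hpart2 : -(d - u * (α + γ * lamStar)) * Q ≤ 0 := by
    have : 0 < d - u * (α + γ * lamStar) := by linarith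
    nlinarith
  refine ⟨?_, hpart2⟩
  -- expand the vector
  have hexp : M.mulVec (-d • x + u • s) = -d • y + u • M.mulVec s := by
    rw [Matrix.mulVec_add, Matrix.mulVec_smul, Matrix.mulVec_smul, hy]
  have hMs : M.mulVec s = α • s + γ • A.mulVec s := by
    rw [hM, Matrix.add_mulVec, Matrix.smul_mulVec, Matrix.smul_mulVec,
      Matrix.one_mulVec]
  -- T1 bound
  have hT1 : Q ≤ ∑ i, s i * y i := by
    apply Finset.sum_le_sum
    intro i _
    have := S_sq_le S hSodd hSmono hSconc hS'0 (y i)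
    simp only [hs]
    nlinarith [this]
  -- T2 bound
  have hray := rayleigh_aux A hA lamStar hmax s
  have hT2 : ∑ i, s i * (M.mulVec s) i ≤ (α + γ * lamStar) * Q := by
    rw [hMs]
    have expand : ∑ i, s i * ((α • s + γ • A.mulVec s) i)
        = α * Q + γ * ∑ i, s i * (A.mulVec s) i := by
      simp only [Pi.add_apply, Pi.smul_apply, smul_eq_mul, hQ, Finset.mul_sum]
      rw [← Finset.sum_add_distrib]
      congr 1; ext i; ring
    rw [expand]
    nlinarith [hray]
  calc ∑ i, s i * ((M.mulVec (-d • x + u • s)) i)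
      = -d * (∑ i, s i * y i) + u * ∑ i, s i * (M.mulVec s) i := by
        rw [hexp]
        simp only [Pi.add_apply, Pi.smul_apply, smul_eq_mul, Finset.mul_sum]
        rw [← Finset.sum_add_distrib]
        congr 1; ext i; ring
    _ ≤ -d * Q + u * ((α + γ * lamStar) * Q) := by
        have h1 : -d * (∑ i, s i * y i) ≤ -d * Q := by nlinarith [hT1]
        have h2 : u * (∑ i, s i * (M.mulVec s) i) ≤ u * ((α + γ * lamStar) * Q) :=
          mul_le_mul_of_nonneg_left hT2 hu0
        linarith
    _ = -(d - u * (α + γ * lamStar)) * Q := by ring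
end

section
/- (Global convergence to the neutral equilibrium below threshold.) Let A ∈ ℝ^{N×N} be symmetric with largest eigenvalue λ*, let d > 0, α ≥ 0, γ > 0 with α + γλ* > 0, and let u satisfy 0 ≤ u < d/(α + γλ*). Let S : ℝ → ℝ be continuously differentiable, odd, nondecreasing, concave on [0,∞), with S′(0) = 1, |S(y)| ≤ 1 for all y, and S(y) = 0 only if y = 0. Then every solution x : [0,∞) → ℝ^N of ẋ = −d x + u S(α x + γ A x) (S applied componentwise) converges to the origin: x(t) → 0 as t → ∞. -/
open Set intervalIntegral MeasureTheory Matrix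

section Saux
variable {S : ℝ → ℝ}

lemma S_zero (hSodd : ∀ y, S (-y) = -S y) : S 0 = 0 := by
  have := hSodd 0; rw [neg_zero] at this; linarith

lemma S_nonneg (hSodd : ∀ y, S (-y) = -S y) (hSmono : Monotone S)
    {a : ℝ} (ha : 0 ≤ a) : 0 ≤ S a := by
  rw [← S_zero hSodd]; exact hSmono ha

lemma S_concave_lower (hSodd : ∀ y, S (-y) = -S y) (hSconc : ConcaveOn ℝ (Set.Ici 0) S)
    {Y a : ℝ} (hY : 0 < Y) (h0 : 0 ≤ a) (haY : a ≤ Y) : (a / Y) * S Y ≤ S a := by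
  have h1 : (1 - a / Y) + a / Y = 1 := by ring
  have h2 : 0 ≤ a / Y := div_nonneg h0 hY.le
  have h3 : 0 ≤ 1 - a / Y := by
    have : a / Y ≤ 1 := (div_le_one hY).2 haY
    linarith
  have := hSconc.2 (Set.self_mem_Ici (a := (0:ℝ))) (Set.mem_Ici.2 hY.le) h3 h2 h1
  have he : (1 - a / Y) • (0:ℝ) + (a / Y) • Y = a := by
    rw [smul_zero, zero_add, smul_eq_mul, div_mul_cancel₀ a hY.ne']
  rw [he] at this
  have hz : S 0 = 0 := S_zero hSodd
  simpa [smul_eq_mul, hz] using this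

lemma S_le_self (hSreg : ContDiff ℝ 1 S) (hSodd : ∀ y, S (-y) = -S y)
    (hSconc : ConcaveOn ℝ (Set.Ici 0) S) (hS'0 : deriv S 0 = 1)
    {a : ℝ} (ha : 0 ≤ a) : S a ≤ a := by
  rcases eq_or_lt_of_le ha with h | h
  · rw [← h, S_zero hSodd]
  · -- slope argument
    have hda : HasDerivAt S 1 0 := by
      have := (hSreg.differentiable one_ne_zero 0).hasDerivAt
      rwa [hS'0] at this
    have hslope := hasDerivAt_iff_tendsto_slope.1 hda
    have hslope' : Filter.Tendsto (slope S 0) (nhdsWithin 0 (Set.Ioi 0)) (nhds 1) :=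
      hslope.mono_left (nhdsWithin_mono _ (fun x hx => Set.mem_compl_singleton_iff.2 (ne_of_gt hx)))
    have hev : ∀ᶠ h' in nhdsWithin 0 (Set.Ioi 0), S a / a ≤ slope S 0 h' := by
      filter_upwards [Ioo_mem_nhdsGT_of_mem (Set.left_mem_Ico.2 h)] with t ht
      have h1 : (t / a) * S a ≤ S t := S_concave_lower hSodd hSconc h ht.1.le ht.2.le
      rw [slope_def_field]
      have : S t / t ≥ S a / a := by
        rw [ge_iff_le, div_le_div_iff₀ h ht.1]
        calc S a * t = (t / a * S a) * a := by field_simp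
          _ ≤ S t * a := by
            apply mul_le_mul_of_nonneg_right h1 h.le
      simpa [S_zero hSodd] using this
    have : S a / a ≤ 1 := ge_of_tendsto hslope' hev
    exact (div_le_one h).1 this

lemma S_abs_le (hSreg : ContDiff ℝ 1 S) (hSodd : ∀ y, S (-y) = -S y) (hSmono : Monotone S)
    (hSconc : ConcaveOn ℝ (Set.Ici 0) S) (hS'0 : deriv S 0 = 1) (a : ℝ) : |S a| ≤ |a| := by
  rcases le_total 0 a with h | h
  · rw [abs_of_nonneg (S_nonneg hSodd hSmono h), abs_of_nonneg h]
    exact S_le_self hSreg hSodd hSconc hS'0 h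
  · have h' : 0 ≤ -a := by linarith
    have := S_le_self hSreg hSodd hSconc hS'0 h'
    rw [hSodd] at this
    rw [abs_of_nonpos (by
      have := S_nonneg hSodd hSmono h'
      rw [hSodd] at this; linarith), abs_of_nonpos h]
    linarith

lemma S_sq_le_mul (hSreg : ContDiff ℝ 1 S) (hSodd : ∀ y, S (-y) = -S y) (hSmono : Monotone S)
    (hSconc : ConcaveOn ℝ (Set.Ici 0) S) (hS'0 : deriv S 0 = 1) (a : ℝ) :
    S a ^ 2 ≤ a * S a := by
  rcases le_total 0 a with h | h
  · have h1 := S_le_self hSreg hSodd hSconc hS'0 h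
    have h2 := S_nonneg hSodd hSmono h
    nlinarith
  · have h' : 0 ≤ -a := by linarith
    have h1 := S_le_self hSreg hSodd hSconc hS'0 h'
    have h2 := S_nonneg hSodd hSmono h'
    have h3 := hSodd a
    nlinarith

end Saux


section Faux
variable {S : ℝ → ℝ}

noncomputable def Fprim (S : ℝ → ℝ) (a : ℝ) : ℝ := ∫ s in (0:ℝ)..a, S s

lemma F_hasDeriv (hScont : Continuous S) (a : ℝ) : HasDerivAt (Fprim S) (S a) a :=
  intervalIntegral.integral_hasDerivAt_right (hScont.intervalIntegrable 0 a)
    (hScont.stronglyMeasurableAtFilter _ _) hScont.continuousAt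

lemma F_even (hSodd : ∀ y, S (-y) = -S y) (a : ℝ) : Fprim S (-a) = Fprim S a := by
  have h := intervalIntegral.integral_comp_neg (a := 0) (b := a) (fun s => S s)
  -- h : ∫ x in -a..-0, S (-x) = ∫ x in 0..a, S x  (check direction)
  simp only [neg_zero] at h
  have h2 : (∫ x in (0:ℝ)..a, S (-x)) = - Fprim S a := by
    rw [show (∫ x in (0:ℝ)..a, S (-x)) = ∫ x in (0:ℝ)..a, -S x from
      intervalIntegral.integral_congr fun t _ => hSodd t]
    rw [intervalIntegral.integral_neg]; rfl
  have h3 : (∫ x in (-a)..(0:ℝ), S x) = - Fprim S (-a) := intervalIntegral.integral_symm 0 (-a)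
  rw [h2, h3] at h
  linarith

lemma F_nonneg (hSodd : ∀ y, S (-y) = -S y) (hSmono : Monotone S) (a : ℝ) :
    0 ≤ Fprim S a := by
  have key : ∀ b : ℝ, 0 ≤ b → 0 ≤ Fprim S b := by
    intro b hb
    apply intervalIntegral.integral_nonneg hb
    intro t ht
    exact S_nonneg hSodd hSmono ht.1
  rcases le_total 0 a with h | h
  · exact key a h
  · rw [← F_even hSodd]; exact key _ (by linarith)

lemma F_le_mul (hScont : Continuous S) (hSodd : ∀ y, S (-y) = -S y) (hSmono : Monotone S)
    {a : ℝ} (ha : 0 ≤ a) : Fprim S a ≤ a * S a := by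
  have h1 : Fprim S a ≤ ∫ _ in (0:ℝ)..a, S a := by
    apply intervalIntegral.integral_mono_on ha (hScont.intervalIntegrable 0 a)
      (intervalIntegrable_const)
    intro t ht; exact hSmono ht.2
  simpa using h1

lemma F_ge_sq (hScont : Continuous S) (hSodd : ∀ y, S (-y) = -S y)
    (hSconc : ConcaveOn ℝ (Set.Ici 0) S)
    {Y a : ℝ} (hY : 0 < Y) (h0 : 0 ≤ a) (haY : a ≤ Y) :
    (S Y / Y) * (a ^ 2 / 2) ≤ Fprim S a := by
  have h1 : (∫ s in (0:ℝ)..a, (S Y / Y) * s) ≤ Fprim S a := by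
    apply intervalIntegral.integral_mono_on h0
      ((continuous_const.mul continuous_id).intervalIntegrable 0 a) (hScont.intervalIntegrable 0 a)
    intro t ht
    have := S_concave_lower hSodd hSconc hY ht.1 (le_trans ht.2 haY)
    calc S Y / Y * t = t / Y * S Y := by ring
      _ ≤ S t := this
  have h2 : (∫ s in (0:ℝ)..a, (S Y / Y) * s) = (S Y / Y) * (a ^ 2 / 2) := by
    rw [intervalIntegral.integral_const_mul]
    rw [integral_id]
    ring
  linarith

end Faux


lemma quad_le {N : ℕ} (A : Matrix (Fin N) (Fin N) ℝ) (hA : A.IsSymm) (lamStar : ℝ)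
    (hmax : ∀ μ : ℝ, (∃ v : Fin N → ℝ, v ≠ 0 ∧ A.mulVec v = μ • v) → μ ≤ lamStar)
    (z : Fin N → ℝ) : z ⬝ᵥ A.mulVec z ≤ lamStar * (z ⬝ᵥ z) := by
  have hH : A.IsHermitian := by
    rwa [Matrix.IsHermitian, conjTranspose_eq_transpose_of_trivial]
  set b := hH.eigenvectorBasis with hb
  have hbound : ∀ i, hH.eigenvalues i ≤ lamStar := by
    intro i
    refine hmax _ ⟨b i, ?_, hH.mulVec_eigenvectorBasis i⟩
    intro h0
    exact b.orthonormal.ne_zero i (by ext k; exact congrFun h0 k)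
  set T := Matrix.toEuclideanLin A with hT
  have hSym : T.IsSymmetric := Matrix.isHermitian_iff_isSymmetric.1 hH
  set z' : EuclideanSpace ℝ (Fin N) := (WithLp.equiv 2 (Fin N → ℝ)).symm z with hz'
  have hdot : ∀ w : Fin N → ℝ,
      z ⬝ᵥ w = (inner ℝ z' ((WithLp.equiv 2 (Fin N → ℝ)).symm w) : ℝ) := by
    intro w
    rw [EuclideanSpace.inner_eq_star_dotProduct]
    simp [hz']
    exact dotProduct_comm _ _
  have hTz : T z' = (WithLp.equiv 2 (Fin N → ℝ)).symm (A.mulVec z) := by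
    rw [Matrix.toEuclideanLin_apply]
    simp [hz']
  have hTb : ∀ i, T (b i) = hH.eigenvalues i • b i := by
    intro i
    rw [Matrix.toEuclideanLin_apply]
    have := hH.mulVec_eigenvectorBasis i
    apply (WithLp.equiv 2 (Fin N → ℝ)).injective
    simpa using this
  have key : z ⬝ᵥ A.mulVec z = ∑ i, hH.eigenvalues i * (inner ℝ z' (b i) : ℝ)^2 := by
    rw [hdot, ← hTz, ← b.sum_inner_mul_inner z' (T z')]
    refine Finset.sum_congr rfl fun i _ => ?_
    rw [← hSym (b i) z', hTb i, real_inner_smul_left, real_inner_comm (b i) z']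
    ring
  have key2 : z ⬝ᵥ z = ∑ i, (inner ℝ z' (b i) : ℝ)^2 := by
    rw [hdot, ← b.sum_inner_mul_inner z' z']
    refine Finset.sum_congr rfl fun i _ => ?_
    rw [real_inner_comm (b i) z']; ring
  rw [key, key2, Finset.mul_sum]
  refine Finset.sum_le_sum fun i _ => ?_
  exact mul_le_mul_of_nonneg_right (hbound i) (sq_nonneg _)


lemma abs_sub_le_int {g g' h : ℝ → ℝ} {T : ℝ} (hT : 0 ≤ T)
    (hg : ∀ t ∈ Set.Icc (0:ℝ) T, HasDerivAt g (g' t) t)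
    (hc : ContinuousOn g' (Set.Icc 0 T))
    (hb : ∀ t ∈ Set.Icc (0:ℝ) T, |g' t| ≤ h t) (hh : Continuous h)
    (hh0 : ∀ t, 0 ≤ h t) :
    |g T - g 0| ≤ ∫ s in (0:ℝ)..T, h s := by
  have huIcc : Set.uIcc (0:ℝ) T = Set.Icc 0 T := Set.uIcc_of_le hT
  have hint : IntervalIntegrable g' volume 0 T := by
    apply ContinuousOn.intervalIntegrable; rwa [huIcc]
  have hftc : (∫ s in (0:ℝ)..T, g' s) = g T - g 0 := by
    apply intervalIntegral.integral_eq_sub_of_hasDerivAt _ hint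
    intro t ht; exact hg t (huIcc ▸ ht)
  rw [← hftc]
  have hae : ∀ᵐ t ∂(volume.restrict (Set.uIoc 0 T)), ‖g' t‖ ≤ h t := by
    apply MeasureTheory.ae_restrict_of_forall_mem measurableSet_uIoc
    intro t ht
    rw [Set.uIoc_of_le hT] at ht
    exact hb t ⟨ht.1.le, ht.2⟩
  have := intervalIntegral.norm_integral_le_abs_of_norm_le hae (hh.intervalIntegrable 0 T)
  calc |∫ s in (0:ℝ)..T, g' s| ≤ |∫ s in (0:ℝ)..T, h s| := this
    _ = ∫ s in (0:ℝ)..T, h s := abs_of_nonneg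
        (intervalIntegral.integral_nonneg hT fun t _ => hh0 t)

lemma int_exp_mul (C a : ℝ) (ha : a ≠ 0) (T : ℝ) :
    ∫ s in (0:ℝ)..T, C * Real.exp (a * s) = C / a * (Real.exp (a * T) - 1) := by
  have hftc : ∀ s : ℝ, HasDerivAt (fun s => C / a * Real.exp (a * s)) (C * Real.exp (a * s)) s := by
    intro s
    have h1 : HasDerivAt (fun s : ℝ => a * s) a s := by
      simpa using (hasDerivAt_id s).const_mul a
    have h2 := h1.exp
    have h3 := h2.const_mul (C / a)
    refine h3.congr_deriv ?_
    rw [mul_comm (Real.exp (a * s)) a, ← mul_assoc, div_mul_cancel₀ C ha]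
  rw [intervalIntegral.integral_eq_sub_of_hasDerivAt (fun t _ => hftc t)
    ((Continuous.intervalIntegrable (by continuity) 0 T))]
  simp [mul_sub]


section Faux2
variable {S : ℝ → ℝ}

lemma F_ge_sq_abs (hScont : Continuous S) (hSodd : ∀ y, S (-y) = -S y)
    (hSconc : ConcaveOn ℝ (Set.Ici 0) S)
    {Y a : ℝ} (hY : 0 < Y) (ha : |a| ≤ Y) :
    (S Y / Y) * (a ^ 2 / 2) ≤ Fprim S a := by
  rcases le_total 0 a with h | h
  · exact F_ge_sq hScont hSodd hSconc hY h (by rwa [abs_of_nonneg h] at ha)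
  · have h2 := F_ge_sq hScont hSodd hSconc (a := -a) hY (neg_nonneg.2 h)
      (by rwa [abs_of_nonpos h] at ha)
    rw [F_even hSodd] at h2
    simpa [neg_sq] using h2

lemma k_F_le_sq (hScont : Continuous S) (hSodd : ∀ y, S (-y) = -S y) (hSmono : Monotone S)
    (hSconc : ConcaveOn ℝ (Set.Ici 0) S)
    {Y a : ℝ} (hY : 0 < Y) (ha : |a| ≤ Y) :
    (S Y / Y) * Fprim S a ≤ S a ^ 2 := by
  have key : ∀ b : ℝ, 0 ≤ b → b ≤ Y → (S Y / Y) * Fprim S b ≤ S b ^ 2 := by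
    intro b hb hbY
    have h1 := F_le_mul hScont hSodd hSmono hb
    have h2 := S_concave_lower hSodd hSconc hY hb hbY
    have h3 := S_nonneg hSodd hSmono hb
    have h4 := F_nonneg hSodd hSmono b
    have hkY : 0 ≤ S Y / Y := div_nonneg (S_nonneg hSodd hSmono hY.le) hY.le
    have e : S Y / Y * (b * S b) = (b / Y * S Y) * S b := by ring
    nlinarith [mul_le_mul_of_nonneg_left h1 hkY, mul_le_mul_of_nonneg_right h2 h3, e]
  rcases le_total 0 a with h | h
  · exact key a h (by rwa [abs_of_nonneg h] at ha)
  · have := key (-a) (neg_nonneg.2 h) (by rwa [abs_of_nonpos h] at ha)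
    rw [F_even hSodd] at this
    have hodd := hSodd a
    rw [hodd, neg_sq] at this
    exact this

end Faux2
set_option maxHeartbeats 1000000 in
/-- Global convergence to the neutral equilibrium below threshold: for symmetric `A`
with largest eigenvalue `λ*`, homogeneous attention `0 ≤ u < d/(α + γλ*)`, and a
saturation function `S` as in the model, every solution of
`ẋ = −dx + uS(αx + γAx)` converges to the origin. -/
theorem global_convergence_below_threshold {N : ℕ} (A : Matrix (Fin N) (Fin N) ℝ)
    (hA : A.IsSymm) (lamStar : ℝ)
    (heig : ∃ v : Fin N → ℝ, v ≠ 0 ∧ A.mulVec v = lamStar • v)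
    (hmax : ∀ μ : ℝ, (∃ v : Fin N → ℝ, v ≠ 0 ∧ A.mulVec v = μ • v) → μ ≤ lamStar)
    (d α γ u : ℝ) (hd : 0 < d) (hα : 0 ≤ α) (hγ : 0 < γ)
    (hsum : 0 < α + γ * lamStar) (hu0 : 0 ≤ u) (hu : u < d / (α + γ * lamStar))
    (S : ℝ → ℝ) (hSreg : ContDiff ℝ 1 S)
    (hSodd : ∀ y, S (-y) = -S y) (hSmono : Monotone S)
    (hSconc : ConcaveOn ℝ (Set.Ici 0) S) (hS'0 : deriv S 0 = 1)
    (hSbd : ∀ y, |S y| ≤ 1) (hSzero : ∀ y, S y = 0 → y = 0)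
    (x : ℝ → Fin N → ℝ)
    (hx : ∀ t : ℝ, 0 ≤ t → HasDerivAt x
        (-d • x t + u • fun i => S ((α • x t + γ • A.mulVec (x t)) i)) t) :
    Filter.Tendsto x Filter.atTop (nhds 0) := by
  classical
  have hScont : Continuous S := hSreg.continuous
  set lamB := α + γ * lamStar with hlamB
  set B : Matrix (Fin N) (Fin N) ℝ := α • (1 : Matrix (Fin N) (Fin N) ℝ) + γ • A with hBdef
  have hB : ∀ v : Fin N → ℝ, B.mulVec v = α • v + γ • A.mulVec v := by
    intro v
    simp [hBdef, Matrix.add_mulVec, Matrix.smul_mulVec, Matrix.one_mulVec]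
  have hdotnn : ∀ w : Fin N → ℝ, 0 ≤ w ⬝ᵥ w :=
    fun w => Finset.sum_nonneg fun i _ => mul_self_nonneg _
  have hquadB : ∀ w : Fin N → ℝ, w ⬝ᵥ B.mulVec w ≤ lamB * (w ⬝ᵥ w) := by
    intro w
    rw [hB, dotProduct_add, dotProduct_smul, dotProduct_smul]
    have h1 := quad_le A hA lamStar hmax w
    have h2 := hdotnn w
    have h3 : γ * (w ⬝ᵥ A.mulVec w) ≤ γ * (lamStar * (w ⬝ᵥ w)) :=
      mul_le_mul_of_nonneg_left h1 hγ.le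
    simp only [smul_eq_mul, hlamB]
    nlinarith
  set y : ℝ → Fin N → ℝ := fun t => B.mulVec (x t) with hy
  set z : ℝ → Fin N → ℝ := fun t i => S (y t i) with hzdef
  set xd : ℝ → Fin N → ℝ := fun t => -d • x t + u • z t with hxdd
  have hxds : ∀ t, 0 ≤ t → HasDerivAt x (xd t) t := by
    intro t ht
    have h0 := hx t ht
    have he : (fun i => S ((α • x t + γ • A.mulVec (x t)) i)) = z t := by
      funext i
      rw [← hB (x t)]
    rwa [he] at h0
  have hxdi : ∀ (i : Fin N) (t : ℝ), 0 ≤ t → HasDerivAt (fun t => x t i) (xd t i) t :=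
    fun i t ht => hasDerivAt_pi.1 (hxds t ht) i
  have hxdival : ∀ t i, xd t i = -d * x t i + u * z t i := by
    intro t i; simp [hxdd]
  have hxc : ∀ i, ContinuousOn (fun t => x t i) (Set.Ici 0) :=
    fun i t ht => ((hxdi i t ht).continuousAt).continuousWithinAt
  have hyval : ∀ t i, y t i = ∑ j, B i j * x t j := by
    intro t i; simp [hy, Matrix.mulVec, dotProduct]
  have hyc : ∀ i, ContinuousOn (fun t => y t i) (Set.Ici 0) := by
    intro i
    have he : (fun t => y t i) = fun t => ∑ j, B i j * x t j := by
      funext t; exact hyval t i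
    rw [he]
    exact continuousOn_finset_sum _ fun j _ => continuousOn_const.mul (hxc j)
  have hydi : ∀ (i : Fin N) (t : ℝ), 0 ≤ t →
      HasDerivAt (fun t => y t i) ((B.mulVec (xd t)) i) t := by
    intro i t ht
    have h1 : HasDerivAt (fun t => ∑ j, B i j * x t j) (∑ j, B i j * xd t j) t :=
      HasDerivAt.fun_sum fun j _ => (hxdi j t ht).const_mul (B i j)
    have he : (fun t => y t i) = fun t => ∑ j, B i j * x t j := by
      funext t; exact hyval t i
    have hv : (B.mulVec (xd t)) i = ∑ j, B i j * xd t j := by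
      simp [Matrix.mulVec, dotProduct]
    rw [he, hv]
    exact h1
  -- boundedness of trajectories
  set R : ℝ := (∑ j, |x 0 j|) + u / d with hR
  have hsum0nn : (0:ℝ) ≤ ∑ j, |x 0 j| := Finset.sum_nonneg fun j _ => abs_nonneg _
  have hudnn : 0 ≤ u / d := div_nonneg hu0 hd.le
  have hRa : ∀ i, |x 0 i| ≤ ∑ j, |x 0 j| :=
    fun i => Finset.single_le_sum (f := fun j => |x 0 j|) (fun j _ => abs_nonneg _)
      (Finset.mem_univ i)
  have hR0 : 0 ≤ R := by positivity
  have hxbound : ∀ T, 0 ≤ T → ∀ i, |x T i| ≤ R := by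
    intro T hT i
    have hgd : ∀ t ∈ Set.Icc (0:ℝ) T,
        HasDerivAt (fun t => Real.exp (d * t) * x t i)
          (Real.exp (d * t) * (u * z t i)) t := by
      intro t ht
      have h1 : HasDerivAt (fun t : ℝ => Real.exp (d * t)) (d * Real.exp (d * t)) t := by
        simpa [mul_comm] using ((hasDerivAt_id t).const_mul d).exp
      have h2 := h1.mul (hxdi i t ht.1)
      refine h2.congr_deriv ?_
      rw [hxdival]
      ring
    have hc : ContinuousOn (fun t => Real.exp (d * t) * (u * z t i)) (Set.Icc 0 T) := by
      apply ContinuousOn.mul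
      · exact (Real.continuous_exp.comp (continuous_const.mul continuous_id)).continuousOn
      · apply continuousOn_const.mul
        exact hScont.comp_continuousOn ((hyc i).mono (Set.Icc_subset_Ici_self))
    have hbnd : ∀ t ∈ Set.Icc (0:ℝ) T, |Real.exp (d * t) * (u * z t i)| ≤
        u * Real.exp (d * t) := by
      intro t ht
      rw [abs_mul, abs_of_pos (Real.exp_pos _), abs_mul, abs_of_nonneg hu0]
      calc Real.exp (d * t) * (u * |z t i|) ≤ Real.exp (d * t) * (u * 1) := by
            apply mul_le_mul_of_nonneg_left _ (Real.exp_pos _).le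
            exact mul_le_mul_of_nonneg_left (hSbd _) hu0
        _ = u * Real.exp (d * t) := by ring
    have key := abs_sub_le_int hT hgd hc hbnd
      (continuous_const.mul (Real.continuous_exp.comp (continuous_const.mul continuous_id)))
      (fun t => by positivity)
    rw [int_exp_mul u d hd.ne' T] at key
    simp only [mul_zero, Real.exp_zero, one_mul] at key
    set E := Real.exp (d * T) with hE
    have hE1 : 1 ≤ E := Real.one_le_exp (by positivity)
    have habs : |E * x T i| = E * |x T i| := by
      rw [abs_mul, abs_of_pos (by positivity : (0:ℝ) < E)]
    have htri : E * |x T i| - |x 0 i| ≤ |E * x T i - x 0 i| := by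
      rw [← habs]
      exact abs_sub_abs_le_abs_sub _ _
    have hEpos : (0:ℝ) < E := by positivity
    have hfin : E * |x T i| ≤ R * E := by
      have h5 : u / d * (E - 1) ≤ u / d * E := by nlinarith
      have h6 : |x 0 i| ≤ (∑ j, |x 0 j|) * E := by nlinarith [hRa i]
      have h7 : R * E = (∑ j, |x 0 j|) * E + u / d * E := by rw [hR]; ring
      clear_value E R
      linarith [key, htri, h5, h6, h7]
    nlinarith
  -- value of z
  have hzval : ∀ t i, z t i = S (y t i) := fun _ _ => rfl
  -- bound on y along the trajectory
  set Ybar : ℝ := (∑ i, ∑ j, |B i j|) * R + 1 with hYbar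
  have hBsumnn : (0:ℝ) ≤ ∑ i, ∑ j, |B i j| :=
    Finset.sum_nonneg fun i _ => Finset.sum_nonneg fun j _ => abs_nonneg _
  have hYpos : 0 < Ybar := by
    rw [hYbar]
    nlinarith [mul_nonneg hBsumnn hR0]
  have hybound : ∀ t, 0 ≤ t → ∀ i, |y t i| ≤ Ybar := by
    intro t ht i
    rw [hyval]
    calc |∑ j, B i j * x t j| ≤ ∑ j, |B i j * x t j| := Finset.abs_sum_le_sum_abs _ _
      _ ≤ ∑ j, |B i j| * R := Finset.sum_le_sum fun j _ => by
            rw [abs_mul]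
            exact mul_le_mul_of_nonneg_left (hxbound t ht j) (abs_nonneg _)
      _ = (∑ j, |B i j|) * R := by rw [Finset.sum_mul]
      _ ≤ (∑ i', ∑ j, |B i' j|) * R :=
            mul_le_mul_of_nonneg_right (Finset.single_le_sum (f := fun i' => ∑ j, |B i' j|)
              (fun _ _ => Finset.sum_nonneg fun _ _ => abs_nonneg _) (Finset.mem_univ i)) hR0
      _ ≤ Ybar := by rw [hYbar]; linarith
  -- key constants
  have hc0 : 0 < d - u * lamB := by
    have h := (lt_div_iff₀ hsum).1 hu
    linarith
  have hSY : 0 < S Ybar := by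
    rcases (S_nonneg hSodd hSmono hYpos.le).lt_or_eq with h | h
    · exact h
    · exact absurd (hSzero Ybar h.symm) hYpos.ne'
  set k : ℝ := S Ybar / Ybar with hk
  have hkpos : 0 < k := div_pos hSY hYpos
  set c : ℝ := (d - u * lamB) * k with hc
  have hcpos : 0 < c := mul_pos hc0 hkpos
  -- the Lyapunov function W
  set W : ℝ → ℝ := fun t => ∑ i, Fprim S (y t i) with hW
  set Wd : ℝ → ℝ := fun t => ∑ i, S (y t i) * (B.mulVec (xd t)) i with hWdd
  have hWder : ∀ t, 0 ≤ t → HasDerivAt W (Wd t) t := by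
    intro t ht
    have : HasDerivAt (fun s => ∑ i, Fprim S (y s i))
        (∑ i, S (y t i) * (B.mulVec (xd t)) i) t :=
      HasDerivAt.fun_sum fun i _ => by have h := (F_hasDeriv hScont (y t i)).comp t (hydi i t ht); exact h
    exact this
  have hFcont : Continuous (Fprim S) := by
    have hdf : Differentiable ℝ (Fprim S) := fun a => (F_hasDeriv hScont a).differentiableAt
    exact hdf.continuous
  have hWcont : ContinuousOn W (Set.Ici 0) := by
    show ContinuousOn (fun t => ∑ i, Fprim S (y t i)) (Set.Ici 0)
    exact continuousOn_finset_sum _ fun i _ => hFcont.comp_continuousOn (hyc i)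
  have hWnn : ∀ t, 0 ≤ W t := fun t => Finset.sum_nonneg fun i _ => F_nonneg hSodd hSmono _
  -- derivative bound for W
  have hWd_le : ∀ t, 0 ≤ t → Wd t ≤ -c * W t := by
    intro t ht
    have hBxd : B.mulVec (xd t) = (-d) • y t + u • B.mulVec (z t) := by
      rw [show xd t = (-d) • x t + u • z t from rfl]
      rw [Matrix.mulVec_add, Matrix.mulVec_smul, Matrix.mulVec_smul]
    have expand : Wd t = -d * (z t ⬝ᵥ y t) + u * (z t ⬝ᵥ B.mulVec (z t)) := by
      show (∑ i, S (y t i) * (B.mulVec (xd t)) i) = _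
      rw [hBxd]
      simp only [Pi.add_apply, Pi.smul_apply, smul_eq_mul, dotProduct]
      rw [Finset.mul_sum, Finset.mul_sum, ← Finset.sum_add_distrib]
      apply Finset.sum_congr rfl
      intro i _
      rw [← hzval]
      ring
    have h1 : z t ⬝ᵥ B.mulVec (z t) ≤ lamB * (z t ⬝ᵥ z t) := hquadB _
    have h2 : z t ⬝ᵥ z t ≤ z t ⬝ᵥ y t := by
      apply Finset.sum_le_sum
      intro i _
      have hsq := S_sq_le_mul hSreg hSodd hSmono hSconc hS'0 (y t i)
      rw [hzval]
      nlinarith [hsq]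
    have h3 : k * W t ≤ z t ⬝ᵥ z t := by
      show k * (∑ i, Fprim S (y t i)) ≤ ∑ i, z t i * z t i
      rw [Finset.mul_sum]
      apply Finset.sum_le_sum
      intro i _
      have hterm := k_F_le_sq hScont hSodd hSmono hSconc hYpos (hybound t ht i)
      rw [← hk] at hterm
      rw [hzval, ← sq]
      exact hterm
    rw [expand]
    have h4 : u * (z t ⬝ᵥ B.mulVec (z t)) ≤ u * (lamB * (z t ⬝ᵥ z t)) :=
      mul_le_mul_of_nonneg_left h1 hu0
    have h5 : d * (z t ⬝ᵥ z t) ≤ d * (z t ⬝ᵥ y t) := mul_le_mul_of_nonneg_left h2 hd.le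
    have h6 : (d - u * lamB) * (k * W t) ≤ (d - u * lamB) * (z t ⬝ᵥ z t) :=
      mul_le_mul_of_nonneg_left h3 hc0.le
    have hcc : -c * W t = -((d - u * lamB) * (k * W t)) := by rw [hc]; ring
    clear_value c k W Wd z y
    linarith [h4, h5, h6, hcc]
  -- Gronwall: exponential decay of W
  have hGder : ∀ t, 0 ≤ t → HasDerivAt (fun s => Real.exp (c * s) * W s)
      (Real.exp (c * t) * (c * W t + Wd t)) t := by
    intro t ht
    have h1 : HasDerivAt (fun s : ℝ => Real.exp (c * s)) (c * Real.exp (c * t)) t := by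
      simpa [mul_comm] using ((hasDerivAt_id t).const_mul c).exp
    have h2 := h1.mul (hWder t ht)
    refine h2.congr_deriv ?_
    ring
  have hGanti : AntitoneOn (fun s => Real.exp (c * s) * W s) (Set.Ici 0) := by
    apply antitoneOn_of_deriv_nonpos (convex_Ici 0)
    · exact ((Real.continuous_exp.comp (continuous_const.mul continuous_id)).continuousOn).mul
        hWcont
    · intro t ht
      rw [interior_Ici] at ht
      exact ((hGder t (le_of_lt ht)).differentiableAt).differentiableWithinAt
    · intro t ht
      rw [interior_Ici] at ht
      rw [(hGder t (le_of_lt ht)).deriv]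
      have h1 := hWd_le t (le_of_lt ht)
      have h2 := Real.exp_pos (c * t)
      nlinarith
  have hWdecay : ∀ t, 0 ≤ t → Real.exp (c * t) * W t ≤ W 0 := by
    intro t ht
    have h := hGanti Set.self_mem_Ici (Set.mem_Ici.2 ht) ht
    simpa using h
  -- decay of y
  set K : ℝ := Real.sqrt (2 / k * W 0) with hK
  have hKnn : 0 ≤ K := Real.sqrt_nonneg _
  have hydecay : ∀ t, 0 ≤ t → ∀ i, |y t i| ≤ K * Real.exp (-(c/2) * t) := by
    intro t ht i
    have h1 : Fprim S (y t i) ≤ W t :=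
      Finset.single_le_sum (f := fun j => Fprim S (y t j))
        (fun j _ => F_nonneg hSodd hSmono _) (Finset.mem_univ i)
    have h2 := F_ge_sq_abs hScont hSodd hSconc hYpos (hybound t ht i)
    rw [← hk] at h2
    have h2knn : (0:ℝ) ≤ 2 / k := by positivity
    have h3 : (y t i)^2 ≤ 2 / k * W t := by
      have e : 2 / k * (k * ((y t i)^2 / 2)) = (y t i)^2 := by field_simp
      have := mul_le_mul_of_nonneg_left (h2.trans h1) h2knn
      linarith [e ▸ this]
    have h4 : W t ≤ W 0 * Real.exp (-c * t) := by
      have hepos := Real.exp_pos (c * t)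
      rw [show -c * t = -(c * t) by ring, Real.exp_neg, ← div_eq_mul_inv,
        le_div_iff₀ hepos]
      have := hWdecay t ht
      linarith [this, mul_comm (W t) (Real.exp (c * t))]
    have h5 : (y t i)^2 ≤ (K * Real.exp (-(c/2) * t))^2 := by
      have hKsq : K^2 = 2 / k * W 0 :=
        Real.sq_sqrt (mul_nonneg h2knn (hWnn 0))
      have hexp : (Real.exp (-(c/2) * t))^2 = Real.exp (-c * t) := by
        rw [sq, ← Real.exp_add]
        congr 1
        ring
      calc (y t i)^2 ≤ 2 / k * W t := h3
        _ ≤ 2 / k * (W 0 * Real.exp (-c * t)) := by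
            apply mul_le_mul_of_nonneg_left _ h2knn
            exact h4
        _ = K^2 * Real.exp (-c * t) := by rw [hKsq]; ring
        _ = (K * Real.exp (-(c/2) * t))^2 := by rw [mul_pow, hexp]
    calc |y t i| = Real.sqrt ((y t i)^2) := (Real.sqrt_sq_eq_abs _).symm
      _ ≤ Real.sqrt ((K * Real.exp (-(c/2) * t))^2) := Real.sqrt_le_sqrt h5
      _ = K * Real.exp (-(c/2) * t) := Real.sqrt_sq (mul_nonneg hKnn (Real.exp_pos _).le)
  -- decay of the forcing term
  set bb : ℝ := min (c/2) (d/2) with hbb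
  have hbpos : 0 < bb := lt_min (by positivity) (by positivity)
  have hbd : bb < d := lt_of_le_of_lt (min_le_right _ _) (by linarith)
  have hdb : 0 < d - bb := by linarith
  have hSdec : ∀ t, 0 ≤ t → ∀ i, |S (y t i)| ≤ K * Real.exp (-bb * t) := by
    intro t ht i
    calc |S (y t i)| ≤ |y t i| := S_abs_le hSreg hSodd hSmono hSconc hS'0 _
      _ ≤ K * Real.exp (-(c/2) * t) := hydecay t ht i
      _ ≤ K * Real.exp (-bb * t) := by
          apply mul_le_mul_of_nonneg_left _ hKnn
          apply Real.exp_le_exp.2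
          have hble : bb ≤ c/2 := min_le_left _ _
          nlinarith
  -- componentwise convergence
  have hcomp : ∀ (i : Fin N), Filter.Tendsto (fun t => x t i) Filter.atTop (nhds 0) := by
    intro i
    set C : ℝ := u * K / (d - bb) with hC
    have hCnn : 0 ≤ C := by positivity
    have hxfin : ∀ T, 0 ≤ T →
        |x T i| ≤ |x 0 i| * Real.exp (-d * T) + C * Real.exp (-bb * T) := by
      intro T hT
      have hgd : ∀ t ∈ Set.Icc (0:ℝ) T,
          HasDerivAt (fun t => Real.exp (d * t) * x t i)
            (Real.exp (d * t) * (u * z t i)) t := by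
        intro t ht
        have h1 : HasDerivAt (fun t : ℝ => Real.exp (d * t)) (d * Real.exp (d * t)) t := by
          simpa [mul_comm] using ((hasDerivAt_id t).const_mul d).exp
        have h2 := h1.mul (hxdi i t ht.1)
        refine h2.congr_deriv ?_
        rw [hxdival]
        ring
      have hcon : ContinuousOn (fun t => Real.exp (d * t) * (u * z t i)) (Set.Icc 0 T) := by
        apply ContinuousOn.mul
        · exact (Real.continuous_exp.comp (continuous_const.mul continuous_id)).continuousOn
        · apply continuousOn_const.mul
          exact hScont.comp_continuousOn ((hyc i).mono (Set.Icc_subset_Ici_self))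
      have hbnd2 : ∀ t ∈ Set.Icc (0:ℝ) T, |Real.exp (d * t) * (u * z t i)| ≤
          (u * K) * Real.exp ((d - bb) * t) := by
        intro t ht
        rw [abs_mul, abs_of_pos (Real.exp_pos _), abs_mul, abs_of_nonneg hu0]
        have h1 : |z t i| ≤ K * Real.exp (-bb * t) := by
          rw [hzval]
          exact hSdec t ht.1 i
        calc Real.exp (d * t) * (u * |z t i|)
            ≤ Real.exp (d * t) * (u * (K * Real.exp (-bb * t))) := by
              apply mul_le_mul_of_nonneg_left _ (Real.exp_pos _).le
              exact mul_le_mul_of_nonneg_left h1 hu0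
          _ = (u * K) * Real.exp ((d - bb) * t) := by
              rw [show (d - bb) * t = d * t + -bb * t by ring, Real.exp_add]
              ring
      have key := abs_sub_le_int hT hgd hcon hbnd2
        (continuous_const.mul (Real.continuous_exp.comp (continuous_const.mul continuous_id)))
        (fun t => by positivity)
      rw [int_exp_mul (u * K) (d - bb) hdb.ne' T] at key
      simp only [mul_zero, Real.exp_zero, one_mul] at key
      rw [← hC] at key
      have hEpos := Real.exp_pos (d * T)
      rw [← mul_le_mul_iff_of_pos_right hEpos]
      have e1 : Real.exp (-d * T) * Real.exp (d * T) = 1 := by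
        rw [← Real.exp_add, show -d * T + d * T = 0 by ring, Real.exp_zero]
      have e2 : Real.exp (-bb * T) * Real.exp (d * T) = Real.exp ((d - bb) * T) := by
        rw [← Real.exp_add]
        congr 1
        ring
      have eR : (|x 0 i| * Real.exp (-d * T) + C * Real.exp (-bb * T)) * Real.exp (d * T)
          = |x 0 i| + C * Real.exp ((d - bb) * T) := by
        rw [add_mul, mul_assoc, mul_assoc, e1, e2, mul_one]
      have habs2 : |x T i| * Real.exp (d * T) = |Real.exp (d * T) * x T i| := by
        rw [abs_mul, abs_of_pos hEpos]
        ring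
      have htri2 : |Real.exp (d * T) * x T i| - |x 0 i| ≤
          |Real.exp (d * T) * x T i - x 0 i| := abs_sub_abs_le_abs_sub _ _
      have hce : C * (Real.exp ((d - bb) * T) - 1) ≤ C * Real.exp ((d - bb) * T) := by
        nlinarith [hCnn]
      clear_value C K bb
      linarith [key, htri2, habs2, eR, hce]
    have h1 : Filter.Tendsto (fun T : ℝ => Real.exp (-d * T)) Filter.atTop (nhds 0) := by
      apply Real.tendsto_exp_atBot.comp
      exact Filter.Tendsto.const_mul_atTop_of_neg (by linarith : -d < 0) Filter.tendsto_id
    have h2 : Filter.Tendsto (fun T : ℝ => Real.exp (-bb * T)) Filter.atTop (nhds 0) := by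
      apply Real.tendsto_exp_atBot.comp
      exact Filter.Tendsto.const_mul_atTop_of_neg (by linarith : -bb < 0) Filter.tendsto_id
    have hup : Filter.Tendsto
        (fun T => |x 0 i| * Real.exp (-d * T) + C * Real.exp (-bb * T))
        Filter.atTop (nhds 0) := by
      have := (h1.const_mul (|x 0 i|)).add (h2.const_mul C)
      simpa using this
    have hlo : Filter.Tendsto
        (fun T => -(|x 0 i| * Real.exp (-d * T) + C * Real.exp (-bb * T)))
        Filter.atTop (nhds 0) := by
      have := hup.neg
      simpa using this
    apply tendsto_of_tendsto_of_tendsto_of_le_of_le' hlo hup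
    · filter_upwards [Filter.eventually_ge_atTop (0:ℝ)] with T hT
      have := hxfin T hT
      have h := abs_le.1 (this)
      linarith [h.1]
    · filter_upwards [Filter.eventually_ge_atTop (0:ℝ)] with T hT
      have := hxfin T hT
      have h := abs_le.1 (this)
      linarith [h.2]
  rw [tendsto_pi_nhds]
  intro i
  simpa using hcomp i
end
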